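/- arXiv:2205.03080 — 3 statements merged into one kernel-verified Lean document; each statement's English description precedes it below -/
import Mathlib

section
/- Let n, N, M, r be positive integers with N a multiple of n, say N = nK. Let Q be the n×N real matrix obtained by horizontally concatenating K copies of the n×n identity matrix. Let Kx be an N×N real symmetric positive definite matrix, S an r×r complex Hermitian positive definite matrix, H an r×M complex matrix and A an M×N complex matrix. Then for every n×r complex matrix W, the real number Re Tr[(W H A − Q) Kx (W H A − Q)ᴴ] + Re Tr[W S Wᴴ] is greater than or equal to Re Tr[Q (Kx⁻¹ + Aᴴ Hᴴ S⁻¹ H A)⁻¹ Qᵀ]. -/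
open Matrix
open scoped ComplexOrder

theorem stmt1 {n N M r K : ℕ} (hn : 0 < n) (hN : 0 < N) (hM : 0 < M) (hr : 0 < r)
    (hK : 0 < K) (hNK : N = n * K)
    (Q : Matrix (Fin n) (Fin N) ℝ)
    (hQ : ∀ (i : Fin n) (j : Fin N), Q i j = if (j : ℕ) % n = (i : ℕ) then 1 else 0)
    (Kx : Matrix (Fin N) (Fin N) ℝ) (hKx : Kx.PosDef)
    (S : Matrix (Fin r) (Fin r) ℂ) (hS : S.PosDef)
    (H : Matrix (Fin r) (Fin M) ℂ) (A : Matrix (Fin M) (Fin N) ℂ) :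
    ∀ W : Matrix (Fin n) (Fin r) ℂ,
      (Matrix.trace (Q.map Complex.ofReal *
          ((Kx.map Complex.ofReal)⁻¹ + Aᴴ * Hᴴ * S⁻¹ * H * A)⁻¹ *
          (Q.map Complex.ofReal)ᵀ)).re ≤
      (Matrix.trace ((W * H * A - Q.map Complex.ofReal) * Kx.map Complex.ofReal *
          (W * H * A - Q.map Complex.ofReal)ᴴ)).re +
        (Matrix.trace (W * S * Wᴴ)).re := by
  intro W
  rw [Matrix.mul_assoc W H A]
  set Qc := Q.map Complex.ofReal with hQcdef
  set Kc := Kx.map Complex.ofReal with hKcdef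
  set B := H * A with hBdef
  -- facts about Kc
  have hKcPSD : Kc.PosSemidef := by
    obtain ⟨C, hC⟩ : ∃ C : Matrix (Fin N) (Fin N) ℝ, Kx = Cᴴ * C := by
      open scoped MatrixOrder in
      exact CStarAlgebra.nonneg_iff_eq_star_mul_self.mp hKx.posSemidef.nonneg
    have : Kc = (C.map Complex.ofReal)ᴴ * (C.map Complex.ofReal) := by
      ext i j
      simp [hKcdef, hC, mul_apply, conjTranspose_apply, Complex.conj_ofReal]
    rw [this]
    exact posSemidef_conjTranspose_mul_self _
  have hKcH : Kcᴴ = Kc := by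
    ext i j
    simp only [hKcdef, conjTranspose_apply, map_apply, Complex.star_def, Complex.conj_ofReal]
    exact congrArg _ (congrFun (congrFun hKx.isHermitian.eq i) j)
  have hKcU : IsUnit Kc.det := by
    have : Kc.det = Complex.ofReal Kx.det := (Complex.ofRealHom.map_det Kx).symm
    rw [this]
    simp [isUnit_iff_ne_zero, hKx.det_pos.ne']
  have : Invertible Kc := Kc.invertibleOfIsUnitDet hKcU
  have hQcH : Qcᴴ = Qcᵀ := by
    ext i j
    simp [hQcdef, conjTranspose_apply, transpose_apply, Complex.conj_ofReal]
  set R := B * Kc * Bᴴ + S with hRdef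
  have hR : R.PosDef := Matrix.PosDef.posSemidef_add (hKcPSD.mul_mul_conjTranspose_same B) hS
  have : Invertible S := hS.isUnit.invertible
  have : Invertible R := hR.isUnit.invertible
  have hRiH : (R⁻¹)ᴴ = R⁻¹ := hR.inv.isHermitian
  have e2 : ∀ T : Matrix (Fin r) (Fin N) ℂ, B * (Kc * (Bᴴ * T)) = R * T - S * T := by
    intro T; rw [hRdef]; simp [Matrix.add_mul, Matrix.sub_mul, Matrix.mul_assoc]
  have e3 : ∀ T : Matrix (Fin r) (Fin n) ℂ, R * T = B * (Kc * (Bᴴ * T)) + S * T := by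
    intro T; rw [hRdef]; simp [Matrix.add_mul, Matrix.mul_assoc]
  have woodbury : (Kc⁻¹ + Bᴴ * S⁻¹ * B) * (Kc - Kc * Bᴴ * R⁻¹ * (B * Kc)) = 1 := by
    simp only [Matrix.add_mul, Matrix.mul_sub, Matrix.mul_assoc,
      Matrix.inv_mul_cancel_left_of_invertible, Matrix.inv_mul_of_invertible]
    rw [e2 (R⁻¹ * (B * Kc))]
    simp only [Matrix.mul_sub, Matrix.mul_inv_cancel_left_of_invertible,
      Matrix.inv_mul_cancel_left_of_invertible]
    abel
  have hPgoal : Kc⁻¹ + Aᴴ * Hᴴ * S⁻¹ * H * A = Kc⁻¹ + Bᴴ * S⁻¹ * B := by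
    rw [hBdef, conjTranspose_mul]
    simp [Matrix.mul_assoc]
  have hXinv : (Kc⁻¹ + Bᴴ * S⁻¹ * B)⁻¹ = Kc - Kc * Bᴴ * R⁻¹ * (B * Kc) :=
    inv_eq_right_inv woodbury
  have main : (W * B - Qc) * Kc * (W * B - Qc)ᴴ + W * S * Wᴴ
      = (W - Qc * Kc * Bᴴ * R⁻¹) * R * (W - Qc * Kc * Bᴴ * R⁻¹)ᴴ
        + Qc * (Kc - Kc * Bᴴ * R⁻¹ * (B * Kc)) * Qcᴴ := by
    simp only [conjTranspose_sub, conjTranspose_mul, hRiH, hKcH, conjTranspose_conjTranspose,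
      Matrix.sub_mul, Matrix.mul_sub, Matrix.mul_assoc,
      Matrix.mul_inv_cancel_left_of_invertible, Matrix.inv_mul_cancel_left_of_invertible]
    rw [e3 Wᴴ]
    simp only [Matrix.mul_add]
    abel
  -- the positive part
  have hpos : 0 ≤ (Matrix.trace ((W - Qc * Kc * Bᴴ * R⁻¹) * R * (W - Qc * Kc * Bᴴ * R⁻¹)ᴴ)).re := by
    have hPSD : ((W - Qc * Kc * Bᴴ * R⁻¹) * R * (W - Qc * Kc * Bᴴ * R⁻¹)ᴴ).PosSemidef :=
      hR.posSemidef.mul_mul_conjTranspose_same _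
    have h1 : (0:ℂ) ≤ Matrix.trace ((W - Qc * Kc * Bᴴ * R⁻¹) * R * (W - Qc * Kc * Bᴴ * R⁻¹)ᴴ) := by
      rw [Matrix.trace]
      apply Finset.sum_nonneg
      intro i _
      have := hPSD.dotProduct_mulVec_nonneg (Pi.single i 1)
      simpa [dotProduct, Pi.single_apply, Matrix.mulVec, Finset.sum_ite_eq, diag]
        using this
    exact (Complex.le_def.mp h1).1
  -- put everything together
  rw [hPgoal, hXinv, ← hQcH]
  have : (Matrix.trace ((W * B - Qc) * Kc * (W * B - Qc)ᴴ)).re + (Matrix.trace (W * S * Wᴴ)).re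
      = (Matrix.trace ((W - Qc * Kc * Bᴴ * R⁻¹) * R * (W - Qc * Kc * Bᴴ * R⁻¹)ᴴ)).re
        + (Matrix.trace (Qc * (Kc - Kc * Bᴴ * R⁻¹ * (B * Kc)) * Qcᴴ)).re := by
    rw [← Complex.add_re, ← Complex.add_re, ← Matrix.trace_add, ← Matrix.trace_add, main]
  rw [this]
  linarith
end

section
/- Let J be a nonempty finite index set and for each j ∈ J let δ_j, λ_j, R_j be positive reals. Let P₀ > 0 and μ > 0, and define p̂_j = (1/(δ_j λ_j)) · max(0, √(δ_j λ_j R_j / μ) − 1) for each j ∈ J. Suppose Σ_{j∈J} δ_j p̂_j = P₀. Then for every family (p_j)_{j∈J} of nonnegative reals with Σ_{j∈J} δ_j p_j = P₀, one has Σ_{j∈J} δ_j R_j / (1 + δ_j λ_j p_j) ≥ Σ_{j∈J} δ_j R_j / (1 + δ_j λ_j p̂_j). -/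
theorem stmt10 {J : Type*} [Fintype J] [Nonempty J]
    (δ lam R : J → ℝ) (hδ : ∀ j, 0 < δ j) (hlam : ∀ j, 0 < lam j) (hR : ∀ j, 0 < R j)
    (P₀ μ : ℝ) (hP₀ : 0 < P₀) (hμ : 0 < μ)
    (phat : J → ℝ)
    (hphat : ∀ j, phat j =
      (1 / (δ j * lam j)) * max 0 (Real.sqrt (δ j * lam j * R j / μ) - 1))
    (hpow : ∑ j, δ j * phat j = P₀) :
    ∀ p : J → ℝ, (∀ j, 0 ≤ p j) → (∑ j, δ j * p j = P₀) →
      ∑ j, δ j * R j / (1 + δ j * lam j * phat j) ≤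
        ∑ j, δ j * R j / (1 + δ j * lam j * p j) := by
  intro p hp hsum
  have key : ∀ j, δ j * R j / (1 + δ j * lam j * phat j) + μ * (δ j * phat j)
      ≤ δ j * R j / (1 + δ j * lam j * p j) + μ * (δ j * p j) := by
    intro j
    have ha : 0 < δ j * lam j := mul_pos (hδ j) (hlam j)
    have hc : 0 < δ j * R j := mul_pos (hδ j) (hR j)
    have harg : 0 < δ j * lam j * R j / μ := div_pos (mul_pos ha (hR j)) hμ
    have hpj := hp j
    have h1p : 0 < 1 + δ j * lam j * p j := by nlinarith
    rcases le_or_gt (Real.sqrt (δ j * lam j * R j / μ)) 1 with hle | hgt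
    · have hq0 : phat j = 0 := by
        rw [hphat j, max_eq_left (by linarith), mul_zero]
      have hx : δ j * lam j * R j / μ ≤ 1 := by
        nlinarith [Real.sq_sqrt harg.le, Real.sqrt_nonneg (δ j * lam j * R j / μ)]
      have hsq : δ j * lam j * R j ≤ μ := by
        rw [div_le_one hμ] at hx; exact hx
      have key2 : δ j * R j ≤ δ j * R j / (1 + δ j * lam j * p j) + μ * (δ j * p j) := by
        rw [div_add' _ _ _ h1p.ne', le_div_iff₀ h1p]
        nlinarith [mul_nonneg (mul_nonneg (hδ j).le hpj) (sub_nonneg.2 hsq),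
          mul_nonneg (mul_nonneg (mul_nonneg hμ.le (hδ j).le) hpj)
            (mul_nonneg ha.le hpj)]
      simpa [hq0] using key2
    · set s := Real.sqrt (δ j * lam j * R j / μ) with hs_def
      have hs2 : s ^ 2 = δ j * lam j * R j / μ := Real.sq_sqrt harg.le
      have hs0 : (0:ℝ) < s := by linarith
      have hq : phat j = (1 / (δ j * lam j)) * (s - 1) := by
        rw [hphat j, max_eq_right (by linarith)]
      have h1q : 1 + δ j * lam j * phat j = s := by
        rw [hq]; field_simp [(hδ j).ne', (hlam j).ne']; ring
      have hμs : μ * s ^ 2 = δ j * lam j * R j := by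
        rw [hs2]; field_simp
      rw [h1q, hq, ← sub_nonneg]
      have hkey : δ j * R j / (1 + δ j * lam j * p j) + μ * (δ j * p j)
          - (δ j * R j / s + μ * (δ j * (1 / (δ j * lam j) * (s - 1))))
          = μ * δ j * s ^ 2 * (s - (1 + δ j * lam j * p j)) ^ 2
            / ((1 + δ j * lam j * p j) * s ^ 2 * (δ j * lam j)) := by
        have hR' : R j = μ * s ^ 2 / (δ j * lam j) := by
          rw [eq_div_iff ha.ne']; linarith [hμs]
        rw [hR']
        field_simp [(hδ j).ne', (hlam j).ne']
        ring
      rw [hkey]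
      exact div_nonneg
        (mul_nonneg (mul_nonneg (mul_nonneg hμ.le (hδ j).le) (sq_nonneg s)) (sq_nonneg _))
        (mul_nonneg (mul_nonneg h1p.le (sq_nonneg s)) ha.le)
  have hsle : ∑ j, (δ j * R j / (1 + δ j * lam j * phat j) + μ * (δ j * phat j))
      ≤ ∑ j, (δ j * R j / (1 + δ j * lam j * p j) + μ * (δ j * p j)) :=
    Finset.sum_le_sum fun j _ => key j
  rw [Finset.sum_add_distrib, Finset.sum_add_distrib, ← Finset.mul_sum, ← Finset.mul_sum,
    hpow, hsum] at hsle
  linarith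
end

section
/- Let n, N, M, r be positive integers with M ≤ N and N = nK for a positive integer K, and let Q be the n×N real matrix obtained by horizontally concatenating K copies of the n×n identity. Let S be an r×r complex Hermitian positive definite matrix and H an r×M complex matrix. Let U be an N×N real orthogonal matrix and Δ an N×N diagonal matrix with diagonal entries δ_1,…,δ_N > 0 such that Kx = U Δ Uᵀ; let V be an M×M complex unitary matrix and Λ an M×M diagonal matrix with real diagonal entries λ_1,…,λ_M such that Hᴴ S⁻¹ H = V Λ Vᴴ, where λ_j > 0 for j ≤ min(r,M) and λ_j = 0 for min(r,M) < j ≤ M. For j ∈ {1,…,N} set R_j = Σ_{i=1}^{n} ([QU]_{ij})², and assume R_j > 0 for j ≤ min(r,M). Let P₀ > 0 and μ > 0 be such that, with p̂_j = (1/(δ_j λ_j)) · max(0, √(δ_j λ_j R_j/μ) − 1) for j ≤ min(r,M) and p̂_j = 0 for min(r,M) < j ≤ M, one has Σ_{j=1}^{M} δ_j p̂_j = P₀. For φ = (φ_1,…,φ_M) ∈ ℂᴹ let Φ(φ) be the M×N matrix with Φ(φ)_{ji} = φ_j if i = j and 0 otherwise, and A(φ) = V Φ(φ) Uᵀ. Set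 φ̂_j = √(p̂_j). Then for every φ ∈ ℂᴹ with Σ_{j=1}^{M} δ_j |φ_j|² = P₀: Re Tr[Q (Kx⁻¹ + A(φ̂)ᴴ Hᴴ S⁻¹ H A(φ̂))⁻¹ Qᵀ] ≤ Re Tr[Q (Kx⁻¹ + A(φ)ᴴ Hᴴ S⁻¹ H A(φ))⁻¹ Qᵀ]. -/
open Matrix
open scoped ComplexOrder


lemma wf_scalar {c x : ℝ} (hc : 0 < c) (hx : 1 ≤ x) :
    c / max 1 (Real.sqrt c) + max 1 (Real.sqrt c) ≤ c / x + x := by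
  have hx0 : (0:ℝ) < x := lt_of_lt_of_le one_pos hx
  have hs0 : 0 ≤ Real.sqrt c := Real.sqrt_nonneg c
  have hsc : Real.sqrt c ^ 2 = c := Real.sq_sqrt hc.le
  have hcx : c / x * x = c := div_mul_cancel₀ c hx0.ne'
  rcases le_total (Real.sqrt c) 1 with h | h
  · rw [max_eq_left h, div_one]
    have hc1 : c ≤ 1 := by nlinarith
    have hd1 : c / x ≤ 1 := by
      rw [div_le_one hx0]; linarith
    nlinarith [mul_nonneg (sub_nonneg.2 hd1) (sub_nonneg.2 hx)]
  · rw [max_eq_right h]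
    have h1 : c / Real.sqrt c = Real.sqrt c := by
      rw [← hsc]; field_simp; rw [Real.sqrt_sq hs0]
    rw [h1]
    nlinarith [sq_nonneg (Real.sqrt c - x)]

lemma wf_term {δ lam R μ p : ℝ} (hδ : 0 < δ) (hl : 0 < lam) (hR : 0 < R)
    (hμ : 0 < μ) (hp : 0 ≤ p) :
    R * (δ⁻¹ + lam * ((1/(δ*lam)) * max 0 (Real.sqrt (δ*lam*R/μ) - 1)))⁻¹
      + μ * (δ * ((1/(δ*lam)) * max 0 (Real.sqrt (δ*lam*R/μ) - 1)))
    ≤ R * (δ⁻¹ + lam * p)⁻¹ + μ * (δ * p) := by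
  set c := δ*lam*R/μ with hcdef
  have hc : 0 < c := by positivity
  set s := Real.sqrt c with hsdef
  have hs0 : 0 ≤ s := Real.sqrt_nonneg c
  set y := max 1 s with hydef
  have hy1 : 1 ≤ y := le_max_left _ _
  have hy0 : 0 < y := lt_of_lt_of_le one_pos hy1
  have hmax : max 0 (s - 1) = y - 1 := by
    rcases le_total s 1 with h | h
    · rw [max_eq_left (by linarith), hydef, max_eq_left h]; ring
    · rw [max_eq_right (by linarith), hydef, max_eq_right h]
  rw [hmax]
  set x := 1 + δ*lam*p with hxdef
  have hx1 : 1 ≤ x := by nlinarith [mul_nonneg (mul_nonneg hδ.le hl.le) hp]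
  have hx0 : 0 < x := lt_of_lt_of_le one_pos hx1
  have hRc : R = μ * c / (δ * lam) := by
    rw [hcdef]; field_simp
  have e1 : R * (δ⁻¹ + lam * ((1/(δ*lam)) * (y - 1)))⁻¹ + μ * (δ * ((1/(δ*lam)) * (y-1)))
      = μ / lam * (c / y + y - 1) := by
    have : δ⁻¹ + lam * ((1/(δ*lam)) * (y - 1)) = y / δ := by field_simp; ring
    rw [this, hRc]
    field_simp
    ring
  have e2 : R * (δ⁻¹ + lam * p)⁻¹ + μ * (δ * p) = μ / lam * (c / x + x - 1) := by
    have : δ⁻¹ + lam * p = x / δ := by rw [hxdef]; field_simp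
    rw [this, hRc, hxdef]
    field_simp
    ring
  rw [e1, e2]
  have := wf_scalar hc hx1
  have hμl : 0 ≤ μ / lam := by positivity
  rw [hydef, hsdef] at *
  nlinarith [wf_scalar hc hx1]


lemma phi_key {N M : ℕ}
    (lam : ℕ → ℝ) (p : ℕ → ℝ)
    (Φm : Matrix (Fin M) (Fin N) ℂ) (φ : Fin M → ℂ)
    (hΦ : ∀ (j : Fin M) (i : Fin N), Φm j i = if (i : ℕ) = (j : ℕ) then φ j else 0)
    (hp : ∀ j : Fin M, p (j : ℕ) = ‖φ j‖ ^ 2) :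
    Φmᴴ * Matrix.diagonal (fun j : Fin M => (lam (j : ℕ) : ℂ)) * Φm
      = Matrix.diagonal (fun j : Fin N =>
          if (j:ℕ) < M then ((lam (j:ℕ) * p (j:ℕ) : ℝ) : ℂ) else 0) := by
  have hzz : ∀ z : ℂ, (starRingEnd ℂ) z * z = ((‖z‖^2 : ℝ) : ℂ) := by
    intro z
    rw [mul_comm, Complex.mul_conj]
    norm_cast
    rw [Complex.normSq_eq_norm_sq]
  ext i i'
  rw [Matrix.mul_assoc, Matrix.mul_apply]
  have hsummand : ∀ k : Fin M,
      Φmᴴ i k * (Matrix.diagonal (fun j : Fin M => (lam (j : ℕ) : ℂ)) * Φm) k i'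
      = (starRingEnd ℂ) (if (i:ℕ) = (k:ℕ) then φ k else 0) *
          ((lam (k:ℕ) : ℂ) * if (i':ℕ) = (k:ℕ) then φ k else 0) := by
    intro k
    rw [Matrix.conjTranspose_apply, Matrix.diagonal_mul, hΦ, hΦ]
    rfl
  simp only [hsummand]
  by_cases h : (i:ℕ) < M
  · rw [Finset.sum_eq_single (⟨(i:ℕ), h⟩ : Fin M)]
    · by_cases hii : (i':ℕ) = (i:ℕ)
      · have hii' : i = i' := Fin.ext hii.symm
        subst hii'
        rw [Matrix.diagonal_apply_eq, if_pos h]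
        rw [if_pos (show (i:ℕ) = ((⟨(i:ℕ),h⟩ : Fin M) : ℕ) from rfl)]
        rw [mul_comm ((lam (i:ℕ):ℂ))]
        rw [← mul_assoc, hzz, ← hp ⟨(i:ℕ), h⟩]
        push_cast
        ring
      · have hii' : i ≠ i' := fun hc => hii (by rw [hc])
        rw [if_pos (show (i:ℕ) = ((⟨(i:ℕ),h⟩ : Fin M) : ℕ) from rfl),
          if_neg (show ¬((i':ℕ) = ((⟨(i:ℕ),h⟩ : Fin M) : ℕ)) from hii),
          Matrix.diagonal_apply_ne _ hii']
        ring
    · intro b _ hb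
      have : ¬ ((i:ℕ) = (b:ℕ)) := by
        intro hc
        exact hb (Fin.ext hc.symm)
      rw [if_neg this]
      simp
    · intro hb
      exact absurd (Finset.mem_univ _) hb
  · have hall : ∀ k : Fin M, ¬ ((i:ℕ) = (k:ℕ)) := by
      intro k hc
      exact h (hc ▸ k.isLt)
    have : ∀ k : Fin M, (starRingEnd ℂ) (if (i:ℕ) = (k:ℕ) then φ k else 0) *
        ((lam (k:ℕ) : ℂ) * if (i':ℕ) = (k:ℕ) then φ k else 0) = 0 := by
      intro k
      rw [if_neg (hall k)]
      simp
    rw [Finset.sum_congr rfl (fun k _ => this k), Finset.sum_const_zero]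
    by_cases hii : i = i'
    · rw [← hii, Matrix.diagonal_apply_eq, if_neg h]
    · rw [Matrix.diagonal_apply_ne _ hii]

lemma sandwich {N : ℕ} (Uc D E : Matrix (Fin N) (Fin N) ℂ) (hUc : Ucᵀ * Uc = 1) :
    (Uc * D * Ucᵀ) * (Uc * E * Ucᵀ) = Uc * (D * E) * Ucᵀ := by
  calc (Uc*D*Ucᵀ)*(Uc*E*Ucᵀ) = Uc*(D*((Ucᵀ*Uc)*(E*Ucᵀ))) := by
        simp only [Matrix.mul_assoc]
    _ = Uc * (D*E) * Ucᵀ := by rw [hUc, Matrix.one_mul]; simp only [Matrix.mul_assoc]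

lemma trace_reduce {n N M r : ℕ}
    (Q : Matrix (Fin n) (Fin N) ℝ)
    (S : Matrix (Fin r) (Fin r) ℂ)
    (H : Matrix (Fin r) (Fin M) ℂ)
    (U : Matrix (Fin N) (Fin N) ℝ) (hU : Uᵀ * U = 1)
    (δ : ℕ → ℝ) (hδ : ∀ j < N, 0 < δ j)
    (Kx : Matrix (Fin N) (Fin N) ℝ)
    (hKx : Kx = U * Matrix.diagonal (fun j : Fin N => δ (j : ℕ)) * Uᵀ)
    (V : Matrix (Fin M) (Fin M) ℂ) (hV : Vᴴ * V = 1)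
    (lam : ℕ → ℝ) (hlamnn : ∀ j < M, 0 ≤ lam j)
    (hHSH : Hᴴ * S⁻¹ * H = V * Matrix.diagonal (fun j : Fin M => (lam (j : ℕ) : ℂ)) * Vᴴ)
    (R : ℕ → ℝ) (hR : ∀ j : Fin N, R (j : ℕ) = ∑ i, ((Q * U) i j) ^ 2)
    (Φm : Matrix (Fin M) (Fin N) ℂ)
    (φ : Fin M → ℂ)
    (hΦ : ∀ (j : Fin M) (i : Fin N), Φm j i = if (i : ℕ) = (j : ℕ) then φ j else 0)
    (Am : Matrix (Fin M) (Fin N) ℂ)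
    (hA : Am = V * Φm * (U.map Complex.ofReal)ᵀ)
    (p : ℕ → ℝ) (hp : ∀ j : Fin M, p (j : ℕ) = ‖φ j‖ ^ 2) :
    (Matrix.trace (Q.map Complex.ofReal *
        ((Kx.map Complex.ofReal)⁻¹ + Amᴴ * Hᴴ * S⁻¹ * H * Am)⁻¹ *
        (Q.map Complex.ofReal)ᵀ)).re
      = ∑ j ∈ Finset.range N,
          R j * ((δ j)⁻¹ + (if j < M then lam j * p j else 0))⁻¹ := by
  set f : ℝ →+* ℂ := Complex.ofRealHom with hf
  have hmapf : ∀ (a b : ℕ) (X : Matrix (Fin a) (Fin b) ℝ), X.map Complex.ofReal = X.map f := by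
    intro a b X; rfl
  set Uc : Matrix (Fin N) (Fin N) ℂ := U.map f with hUcdef
  have hUc : Ucᵀ * Uc = 1 := by
    rw [hUcdef, ← Matrix.transpose_map, ← Matrix.map_mul, hU, Matrix.map_one f f.map_zero f.map_one]
  have hUc' : Uc * Ucᵀ = 1 := mul_eq_one_comm.mp hUc
  have hUcH : Ucᵀᴴ = Uc := by
    ext i j
    simp [Matrix.conjTranspose_apply, hUcdef, Matrix.map_apply, hf, Complex.conj_ofReal]
  set dr : ℕ → ℝ := fun j => (δ j)⁻¹ + (if j < M then lam j * p j else 0) with hdr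
  have hpnn : ∀ j, (h : j < M) → 0 ≤ p j := by
    intro j h
    have := hp ⟨j, h⟩
    simp only at this
    rw [this]; positivity
  have hdrpos : ∀ j < N, 0 < dr j := by
    intro j hj
    have h1 : 0 < (δ j)⁻¹ := inv_pos.mpr (hδ j hj)
    rcases lt_or_ge j M with h | h
    · simp only [hdr, if_pos h]
      nlinarith [mul_nonneg (hlamnn j h) (hpnn j h)]
    · simp only [hdr, if_neg (not_lt.mpr h)]; linarith
  -- Kx inverse
  have hKxinv : (Kx.map Complex.ofReal)⁻¹
      = Uc * Matrix.diagonal (fun j : Fin N => ((δ (j:ℕ) : ℂ))⁻¹) * Ucᵀ := by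
    apply Matrix.inv_eq_right_inv
    rw [hmapf, hKx, Matrix.map_mul, Matrix.map_mul, Matrix.transpose_map,
      Matrix.diagonal_map f.map_zero, ← hUcdef, sandwich _ _ _ hUc,
      Matrix.diagonal_mul_diagonal]
    have : (fun j : Fin N => f (δ (j:ℕ)) * ((δ (j:ℕ) : ℂ))⁻¹) = fun _ => (1:ℂ) := by
      funext j
      have hne : ((δ (j:ℕ) : ℂ)) ≠ 0 := by
        simp only [ne_eq, Complex.ofReal_eq_zero]
        exact (hδ j j.isLt).ne'
      exact mul_inv_cancel₀ hne
    rw [this, Matrix.diagonal_one, Matrix.mul_one, hUc']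
  -- middle term
  have hmid : Amᴴ * Hᴴ * S⁻¹ * H * Am
      = Uc * Matrix.diagonal (fun j : Fin N =>
          if (j:ℕ) < M then ((lam (j:ℕ) * p (j:ℕ) : ℝ) : ℂ) else 0) * Ucᵀ := by
    have step1 : Amᴴ * Hᴴ * S⁻¹ * H * Am = Amᴴ * (Hᴴ * S⁻¹ * H) * Am := by
      simp only [Matrix.mul_assoc]
    rw [step1, hHSH, hA, hmapf, show U.map f = Uc from rfl]
    have hAH : (V * Φm * Ucᵀ)ᴴ = Uc * Φmᴴ * Vᴴ := by
      rw [Matrix.conjTranspose_mul, Matrix.conjTranspose_mul, hUcH, Matrix.mul_assoc]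
    rw [hAH, ← phi_key lam p Φm φ hΦ hp]
    calc Uc * Φmᴴ * Vᴴ * (V * Matrix.diagonal (fun j : Fin M => (lam (j : ℕ) : ℂ)) * Vᴴ) *
          (V * Φm * Ucᵀ)
        = Uc * (Φmᴴ * ((Vᴴ * V) * (Matrix.diagonal (fun j : Fin M => (lam (j : ℕ) : ℂ)) *
            ((Vᴴ * V) * (Φm * Ucᵀ))))) := by simp only [Matrix.mul_assoc]
      _ = Uc * (Φmᴴ * Matrix.diagonal (fun j : Fin M => (lam (j : ℕ) : ℂ)) * Φm) * Ucᵀ := by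
            rw [hV, Matrix.one_mul, Matrix.one_mul]; simp only [Matrix.mul_assoc]
  -- sum
  have hdiagsum : (Kx.map Complex.ofReal)⁻¹ + Amᴴ * Hᴴ * S⁻¹ * H * Am
      = Uc * Matrix.diagonal (fun j : Fin N => ((dr (j:ℕ) : ℝ) : ℂ)) * Ucᵀ := by
    have hdadd : Matrix.diagonal (fun j : Fin N => ((δ (j:ℕ):ℂ))⁻¹)
        + Matrix.diagonal (fun j : Fin N =>
            if (j:ℕ) < M then ((lam (j:ℕ) * p (j:ℕ) : ℝ):ℂ) else 0)
        = Matrix.diagonal (fun j : Fin N => ((dr (j:ℕ) : ℝ):ℂ)) := by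
      ext i i'
      by_cases h : i = i'
      · subst h
        simp only [Matrix.add_apply, Matrix.diagonal_apply_eq, hdr]
        by_cases hm : (i:ℕ) < M
        · rw [if_pos hm, if_pos hm]; push_cast; ring
        · rw [if_neg hm, if_neg hm]; push_cast; ring
      · simp [Matrix.add_apply, Matrix.diagonal_apply_ne _ h]
    rw [hKxinv, hmid, ← Matrix.add_mul, ← Matrix.mul_add, hdadd]
  -- inverse of sum
  have hinv : ((Kx.map Complex.ofReal)⁻¹ + Amᴴ * Hᴴ * S⁻¹ * H * Am)⁻¹
      = Uc * Matrix.diagonal (fun j : Fin N => (((dr (j:ℕ))⁻¹ : ℝ) : ℂ)) * Ucᵀ := by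
    rw [hdiagsum]
    apply Matrix.inv_eq_right_inv
    rw [sandwich _ _ _ hUc, Matrix.diagonal_mul_diagonal]
    have : (fun j : Fin N => ((dr (j:ℕ) : ℝ) : ℂ) * (((dr (j:ℕ))⁻¹ : ℝ) : ℂ)) = fun _ => (1:ℂ) := by
      funext j
      rw [← Complex.ofReal_mul, mul_inv_cancel₀ (hdrpos j j.isLt).ne']
      norm_num
    rw [this, Matrix.diagonal_one, Matrix.mul_one, hUc']
  rw [hinv]
  -- trace computation
  set B : Matrix (Fin n) (Fin N) ℂ := (Q * U).map f with hB
  have hQU : Q.map Complex.ofReal * Uc = B := by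
    rw [hmapf, hUcdef, hB, ← Matrix.map_mul]
  have hprod : Q.map Complex.ofReal *
      (Uc * Matrix.diagonal (fun j : Fin N => (((dr (j:ℕ))⁻¹ : ℝ) : ℂ)) * Ucᵀ) *
      (Q.map Complex.ofReal)ᵀ
      = B * Matrix.diagonal (fun j : Fin N => (((dr (j:ℕ))⁻¹ : ℝ) : ℂ)) * Bᵀ := by
    rw [← hQU, Matrix.transpose_mul]
    simp only [Matrix.mul_assoc]
  rw [hprod]
  have htr : Matrix.trace (B * Matrix.diagonal (fun j : Fin N => (((dr (j:ℕ))⁻¹ : ℝ) : ℂ)) * Bᵀ)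
      = ∑ j : Fin N, (((dr (j:ℕ))⁻¹ : ℝ) : ℂ) * ((R (j:ℕ) : ℝ) : ℂ) := by
    rw [Matrix.trace]
    have hentry : ∀ i : Fin n,
        Matrix.diag (B * Matrix.diagonal (fun j : Fin N => (((dr (j:ℕ))⁻¹ : ℝ) : ℂ)) * Bᵀ) i
        = ∑ j : Fin N, (((dr (j:ℕ))⁻¹ : ℝ) : ℂ) * (B i j)^2 := by
      intro i
      rw [Matrix.diag_apply, Matrix.mul_apply]
      apply Finset.sum_congr rfl
      intro j _
      rw [Matrix.mul_diagonal, Matrix.transpose_apply]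
      ring
    rw [Finset.sum_congr rfl (fun i _ => hentry i), Finset.sum_comm]
    apply Finset.sum_congr rfl
    intro j _
    rw [← Finset.mul_sum]
    congr 1
    rw [hR j]
    push_cast
    apply Finset.sum_congr rfl
    intro i _
    rw [hB]
    simp [Matrix.map_apply, hf]
  rw [htr]
  have : ∑ j : Fin N, (((dr (j:ℕ))⁻¹ : ℝ) : ℂ) * ((R (j:ℕ) : ℝ) : ℂ)
      = (((∑ j ∈ Finset.range N, R j * (dr j)⁻¹ : ℝ)) : ℂ) := by
    rw [← Fin.sum_univ_eq_sum_range (fun j => R j * (dr j)⁻¹) N]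
    push_cast
    apply Finset.sum_congr rfl
    intro j _
    ring
  rw [this, Complex.ofReal_re]

theorem stmt14 {n N M r K : ℕ} (hn : 0 < n) (hN : 0 < N) (hM : 0 < M) (hr : 0 < r)
    (hK : 0 < K) (hMN : M ≤ N) (hNK : N = n * K)
    (Q : Matrix (Fin n) (Fin N) ℝ)
    (hQ : ∀ (i : Fin n) (j : Fin N), Q i j = if (j : ℕ) % n = (i : ℕ) then 1 else 0)
    (S : Matrix (Fin r) (Fin r) ℂ) (hS : S.PosDef)
    (H : Matrix (Fin r) (Fin M) ℂ)
    (U : Matrix (Fin N) (Fin N) ℝ) (hU : Uᵀ * U = 1)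
    (δ : ℕ → ℝ) (hδ : ∀ j < N, 0 < δ j)
    (Kx : Matrix (Fin N) (Fin N) ℝ)
    (hKx : Kx = U * Matrix.diagonal (fun j : Fin N => δ (j : ℕ)) * Uᵀ)
    (V : Matrix (Fin M) (Fin M) ℂ) (hV : Vᴴ * V = 1)
    (lam : ℕ → ℝ) (hlampos : ∀ j < min r M, 0 < lam j)
    (hlam0 : ∀ j, min r M ≤ j → j < M → lam j = 0)
    (hHSH : Hᴴ * S⁻¹ * H = V * Matrix.diagonal (fun j : Fin M => (lam (j : ℕ) : ℂ)) * Vᴴ)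
    (R : ℕ → ℝ) (hR : ∀ j : Fin N, R (j : ℕ) = ∑ i, ((Q * U) i j) ^ 2)
    (hRpos : ∀ j < min r M, 0 < R j)
    (P₀ μ : ℝ) (hP₀ : 0 < P₀) (hμ : 0 < μ)
    (phat : ℕ → ℝ)
    (hphat1 : ∀ j < min r M, phat j =
      (1 / (δ j * lam j)) * max 0 (Real.sqrt (δ j * lam j * R j / μ) - 1))
    (hphat2 : ∀ j, min r M ≤ j → phat j = 0)
    (hpow : ∑ j ∈ Finset.range M, δ j * phat j = P₀)
    (Φ : (Fin M → ℂ) → Matrix (Fin M) (Fin N) ℂ)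
    (hΦ : ∀ (φ : Fin M → ℂ) (j : Fin M) (i : Fin N),
      Φ φ j i = if (i : ℕ) = (j : ℕ) then φ j else 0)
    (A : (Fin M → ℂ) → Matrix (Fin M) (Fin N) ℂ)
    (hA : ∀ φ, A φ = V * Φ φ * (U.map Complex.ofReal)ᵀ)
    (φhat : Fin M → ℂ) (hφhat : ∀ j, φhat j = (Real.sqrt (phat (j : ℕ)) : ℂ)) :
    ∀ φ : Fin M → ℂ, (∑ j : Fin M, δ (j : ℕ) * ‖φ j‖ ^ 2 = P₀) →
      (Matrix.trace (Q.map Complex.ofReal *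
          ((Kx.map Complex.ofReal)⁻¹ + (A φhat)ᴴ * Hᴴ * S⁻¹ * H * A φhat)⁻¹ *
          (Q.map Complex.ofReal)ᵀ)).re ≤
        (Matrix.trace (Q.map Complex.ofReal *
          ((Kx.map Complex.ofReal)⁻¹ + (A φ)ᴴ * Hᴴ * S⁻¹ * H * A φ)⁻¹ *
          (Q.map Complex.ofReal)ᵀ)).re := by
  intro φ hφpow
  have hlamnn : ∀ j < M, 0 ≤ lam j := by
    intro j hj
    rcases lt_or_ge j (min r M) with h | h
    · exact (hlampos j h).le
    · rw [hlam0 j h hj]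
  have hphatnn : ∀ j, 0 ≤ phat j := by
    intro j
    rcases lt_or_ge j (min r M) with h | h
    · rw [hphat1 j h]
      have hδp : 0 < δ j := hδ j (lt_of_lt_of_le (lt_of_lt_of_le h (min_le_right r M)) hMN)
      have hlp : 0 < lam j := hlampos j h
      exact mul_nonneg (by positivity) (le_max_left _ _)
    · rw [hphat2 j h]
  have hpφhat : ∀ j : Fin M, phat (j:ℕ) = ‖φhat j‖ ^ 2 := by
    intro j
    rw [hφhat j, Complex.norm_real, Real.norm_eq_abs,
      abs_of_nonneg (Real.sqrt_nonneg _), Real.sq_sqrt (hphatnn (j:ℕ))]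
  set pφ : ℕ → ℝ := fun j => if h : j < M then ‖φ ⟨j, h⟩‖ ^ 2 else 0 with hpφdef
  have hpφ : ∀ j : Fin M, pφ (j:ℕ) = ‖φ j‖ ^ 2 := by
    intro j
    simp only [hpφdef, dif_pos j.isLt, Fin.eta]
  have hpφnn : ∀ j, 0 ≤ pφ j := by
    intro j
    rcases lt_or_ge j M with h | h
    · simp only [hpφdef, dif_pos h]; positivity
    · simp only [hpφdef, dif_neg (not_lt.mpr h), le_refl]
  rw [trace_reduce Q S H U hU δ hδ Kx hKx V hV lam hlamnn hHSH R hR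
      (Φ φhat) φhat (hΦ φhat) (A φhat) (hA φhat) phat hpφhat,
    trace_reduce Q S H U hU δ hδ Kx hKx V hV lam hlamnn hHSH R hR
      (Φ φ) φ (hΦ φ) (A φ) (hA φ) pφ hpφ]
  -- split off the tail j ∈ [M, N)
  rw [← Finset.sum_range_add_sum_Ico _ hMN,
    ← Finset.sum_range_add_sum_Ico
      (fun j => R j * ((δ j)⁻¹ + (if j < M then lam j * pφ j else 0))⁻¹) hMN]
  have htail : ∑ j ∈ Finset.Ico M N, R j * ((δ j)⁻¹ + (if j < M then lam j * phat j else 0))⁻¹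
      = ∑ j ∈ Finset.Ico M N, R j * ((δ j)⁻¹ + (if j < M then lam j * pφ j else 0))⁻¹ := by
    apply Finset.sum_congr rfl
    intro j hj
    have : ¬ j < M := not_lt.mpr (Finset.mem_Ico.mp hj).1
    rw [if_neg this, if_neg this]
  rw [htail]
  have hpowφ : ∑ j ∈ Finset.range M, δ j * pφ j = P₀ := by
    rw [← Fin.sum_univ_eq_sum_range (fun j => δ j * pφ j) M, ← hφpow]
    apply Finset.sum_congr rfl
    intro j _
    rw [hpφ j]
  have key : ∀ j ∈ Finset.range M,
      R j * ((δ j)⁻¹ + (if j < M then lam j * phat j else 0))⁻¹ + μ * (δ j * phat j)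
      ≤ R j * ((δ j)⁻¹ + (if j < M then lam j * pφ j else 0))⁻¹ + μ * (δ j * pφ j) := by
    intro j hj
    have hjM : j < M := Finset.mem_range.mp hj
    have hδp : 0 < δ j := hδ j (lt_of_lt_of_le hjM hMN)
    rw [if_pos hjM, if_pos hjM]
    rcases lt_or_ge j (min r M) with h | h
    · rw [hphat1 j h]
      exact wf_term hδp (hlampos j h) (hRpos j h) hμ (hpφnn j)
    · rw [hphat2 j h, hlam0 j h hjM]
      have h0 : 0 ≤ μ * (δ j * pφ j) := by
        have := hpφnn j
        positivity
      simp only [mul_zero, zero_mul, add_zero]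
      linarith
  have hsum := Finset.sum_le_sum key
  rw [Finset.sum_add_distrib, Finset.sum_add_distrib, ← Finset.mul_sum, ← Finset.mul_sum,
    hpow, hpowφ] at hsum
  linarith
end
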